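/- Let r ≥ 0 and let A be the n×n real matrix whose every entry in the first column equals r and all of whose other entries are zero. Then A and the matrix r·J_n have the same characteristic polynomial, namely t^{n−1}(t − r); in particular, A (which has all row sums equal to r) is cospectral to the nonnegative r-generalized doubly stochastic matrix r·J_n, showing that the bound k_A = −r in the preceding realization theorem can be attained. -/

import Mathlib

open Polynomial

/-- The matrix `J_n`: every entry equal to `1/n`. -/
noncomputable def Jmat (n : ℕ) : Matrix (Fin n) (Fin n) ℝ :=
  Matrix.of fun _ _ => (1 : ℝ) / n

section aux
open Matrix

lemma prod_ite_diag (n : ℕ) (hn : 0 < n) (p q : ℝ[X]) :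
    (∏ i : Fin n, if i = (⟨0, hn⟩ : Fin n) then p else q) = q ^ (n - 1) * p := by
  rw [← Finset.mul_prod_erase Finset.univ _ (Finset.mem_univ (⟨0, hn⟩ : Fin n))]
  rw [if_pos rfl]
  rw [Finset.prod_congr rfl (fun i hi => if_neg (Finset.ne_of_mem_erase hi))]
  rw [Finset.prod_const, Finset.card_erase_of_mem (Finset.mem_univ _), Finset.card_univ,
    Fintype.card_fin, mul_comm]

/-- Charpoly of a constant matrix. -/
lemma charpoly_const (n : ℕ) (hn : 0 < n) (c : ℝ) :
    (Matrix.of (fun _ _ : Fin n => c)).charpoly = X ^ (n - 1) * (X - C ((n : ℝ) * c)) := by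
  set M : Matrix (Fin n) (Fin n) ℝ := Matrix.of (fun _ _ => c) with hM
  set K := FractionRing ℝ[X]
  set φ := algebraMap ℝ[X] K with hφ
  have hinj : Function.Injective φ := IsFractionRing.injective _ _
  apply hinj
  set x : K := φ X with hxdef
  have hx : x ≠ 0 := by
    simpa using fun h => X_ne_zero (hinj (h.trans (map_zero φ).symm))
  set d : K := φ (C c) with hd
  set e : K := d / x with he
  have hxe : x * e = d := by
    rw [he, mul_div_cancel₀ _ hx]
  have key : (charmatrix M).map φ
      = x • (1 + replicateCol Unit (fun _ => -e) * replicateRow Unit (1 : Fin n → K)) := by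
    ext i j
    by_cases h : i = j
    · subst h
      simp [charmatrix_apply_eq, mul_apply, Matrix.one_apply_eq, hM, mul_add, hxe,
        smul_eq_mul, sub_eq_add_neg]
      linear_combination hxe + hd - hxdef
    · simp [charmatrix_apply_ne _ _ _ h, mul_apply, Matrix.one_apply_ne h, hM, mul_add, hxe,
        smul_eq_mul]
      linear_combination hxe + hd
  have hdet : φ (charmatrix M).det = ((charmatrix M).map φ).det := RingHom.map_det φ _
  rw [Matrix.charpoly, hdet, key, det_smul, det_one_add_replicateCol_mul_replicateRow]
  have hdot : (1 : Fin n → K) ⬝ᵥ (fun _ => -e) = -((n : K) * e) := by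
    simp [dotProduct, Finset.sum_const, Finset.card_univ, mul_comm]
  rw [hdot]
  rw [Fintype.card_fin, _root_.map_mul φ, map_pow, map_sub]
  have hxn : x ^ n = x ^ (n - 1) * x := by
    conv_lhs => rw [show n = n - 1 + 1 by omega]
    rw [pow_succ]
  rw [hxn]
  have : φ (C ((n : ℝ) * c)) = (n : K) * d := by
    rw [hd, show C ((n:ℝ) * c) = (n : ℝ[X]) * C c by rw [C_mul, C_eq_natCast],
      _root_.map_mul φ, map_natCast]
  rw [this, ← hxdef]
  have : x * (1 + -((n : K) * e)) = x - (n : K) * d := by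
    rw [mul_add, mul_one, mul_neg, ← mul_assoc, mul_comm x (n:K), mul_assoc, hxe]
    ring
  rw [mul_assoc, this]

end aux

/-- Let `r ≥ 0` and let `A` be the `n × n` matrix (`n ≥ 1`) whose every entry in the
first column equals `r` and all of whose other entries are zero.  Then `A` has all row
sums equal to `r`, the matrix `r·J_n` is entrywise nonnegative with all row and column
sums equal to `r`, and `A` and `r·J_n` share the characteristic polynomial
`t^(n-1)·(t - r)`. -/
theorem stmt8 (n : ℕ) (hn : 0 < n) (r : ℝ) (hr : 0 ≤ r)
    (A : Matrix (Fin n) (Fin n) ℝ) (hA : ∀ i j, A i j = if j = ⟨0, hn⟩ then r else 0) :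
    (∀ i, ∑ j, A i j = r) ∧
    (∀ i j, 0 ≤ (r • Jmat n) i j) ∧
    (∀ i, ∑ j, (r • Jmat n) i j = r) ∧
    (∀ j, ∑ i, (r • Jmat n) i j = r) ∧
    A.charpoly = (r • Jmat n).charpoly ∧
    A.charpoly = X ^ (n - 1) * (X - C r) := by
  have hn0 : (n : ℝ) ≠ 0 := Nat.cast_ne_zero.mpr hn.ne'
  have hJ : (r • Jmat n) = Matrix.of (fun _ _ : Fin n => r / n) := by
    ext i j
    simp [Jmat]
    ring
  have hJsum : ∑ _i : Fin n, r / (n : ℝ) = r := by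
    rw [Finset.sum_const, Finset.card_univ, Fintype.card_fin, nsmul_eq_mul,
      mul_div_cancel₀ _ hn0]
  have hAcp : A.charpoly = X ^ (n - 1) * (X - C r) := by
    have htri : (Matrix.charmatrix A).BlockTriangular OrderDual.toDual := by
      intro i j hij
      have hij' : i < j := hij
      have hj : j ≠ (⟨0, hn⟩ : Fin n) := by
        intro h
        exact absurd (h ▸ hij' : i < (⟨0, hn⟩ : Fin n)) (by simp [Fin.lt_def])
      rw [Matrix.charmatrix_apply_ne _ _ _ hij'.ne, hA, if_neg hj, map_zero, neg_zero]
    rw [Matrix.charpoly, Matrix.det_of_lowerTriangular _ htri]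
    have : ∀ i : Fin n, (Matrix.charmatrix A) i i
        = if i = (⟨0, hn⟩ : Fin n) then X - C r else X := by
      intro i
      rw [Matrix.charmatrix_apply_eq, hA]
      split <;> simp
    rw [Finset.prod_congr rfl (fun i _ => this i), prod_ite_diag n hn]
  have hJcp : (r • Jmat n).charpoly = X ^ (n - 1) * (X - C r) := by
    rw [hJ, charpoly_const n hn, mul_div_cancel₀ _ hn0]
  refine ⟨?_, ?_, ?_, ?_, hAcp.trans hJcp.symm, hAcp⟩
  · intro i
    simp only [hA]
    rw [Finset.sum_ite_eq' Finset.univ]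
    simp
  · intro i j
    rw [hJ]
    exact div_nonneg hr (Nat.cast_nonneg n)
  · intro i
    simp only [hJ, Matrix.of_apply]
    exact hJsum
  · intro j
    simp only [hJ, Matrix.of_apply]
    exact hJsum
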